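/- Let S be a regular semigroup and θ ∈ S. In the variant semigroup S^θ with product a * b = aθb, the set Reg(S^θ) of regular elements of S^θ is closed under * whenever it is nonempty; in particular, for S = End(V) the regular elements of the variant (End(V), *) form a subsemigroup. -/
import Mathlib

/-- Every linear endomorphism of a vector space has a generalized (inner) inverse. -/
lemma endo_regular {K V : Type*} [Field K] [AddCommGroup V] [Module K V]
    (f : V →ₗ[K] V) : ∃ g : V →ₗ[K] V, f ∘ₗ g ∘ₗ f = f := by
  obtain ⟨g₀, hg₀⟩ := f.rangeRestrict.exists_rightInverse_of_surjective
    f.range_rangeRestrict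
  obtain ⟨W, hW⟩ := Submodule.exists_isCompl (LinearMap.range f)
  refine ⟨g₀ ∘ₗ (LinearMap.range f).linearProjOfIsCompl W hW, ?_⟩
  ext v
  simp only [LinearMap.coe_comp, Function.comp_apply]
  have h1 : (LinearMap.range f).linearProjOfIsCompl W hW (f v)
      = ⟨f v, LinearMap.mem_range_self f v⟩ :=
    Submodule.linearProjOfIsCompl_apply_left hW ⟨f v, LinearMap.mem_range_self f v⟩
  rw [h1]
  have h2 := congrArg (fun h => (h ⟨f v, LinearMap.mem_range_self f v⟩ : LinearMap.range f)) hg₀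
  simpa using congrArg Subtype.val h2

lemma semigroup_part {S : Type*} [Semigroup S] (hreg : ∀ s : S, ∃ t : S, s * t * s = s)
    (θ a b : S) (ha : ∃ x : S, a * θ * x * θ * a = a) (hb : ∃ y : S, b * θ * y * θ * b = b) :
    ∃ z : S, (a * θ * b) * θ * z * θ * (a * θ * b) = a * θ * b := by
  obtain ⟨x, hx⟩ := ha
  obtain ⟨y, hy⟩ := hb
  obtain ⟨t, ht⟩ := hreg (θ * a * θ * b * θ)
  refine ⟨t, ?_⟩
  have key : a * θ * b = (a * θ * x) * (θ * a * θ * b * θ) * (y * θ * b) := by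
    calc a * θ * b = (a * θ * x * θ * a) * θ * (b * θ * y * θ * b) := by rw [hx, hy]
    _ = (a * θ * x) * (θ * a * θ * b * θ) * (y * θ * b) := by
        simp only [mul_assoc]
  calc (a * θ * b) * θ * t * θ * (a * θ * b)
      = ((a * θ * x * θ * a) * θ * b) * θ * t * θ * ((a * θ * (b * θ * y * θ * b))) := by
        rw [hx, hy]
    _ = (a * θ * x) * ((θ * a * θ * b * θ) * t * (θ * a * θ * b * θ)) * (y * θ * b) := by
        simp only [mul_assoc]
    _ = (a * θ * x) * (θ * a * θ * b * θ) * (y * θ * b) := by rw [ht]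
    _ = a * θ * b := key.symm


/-- In the variant `S^θ` of a regular semigroup `S` (product `a * b = a θ b`), the set of
regular elements of `S^θ` is closed under `*`; in particular, for `S = End(V)` the
regular elements of the variant `(End(V), *)` form a subsemigroup. -/
theorem stmt_17 (S : Type*) [Semigroup S] (hreg : ∀ s : S, ∃ t : S, s * t * s = s)
    (θ : S) (K V : Type*) [Field K] [AddCommGroup V] [Module K V]
    (Θ : V →ₗ[K] V) :
    (∀ a b : S, (∃ x : S, a * θ * x * θ * a = a) → (∃ y : S, b * θ * y * θ * b = b) →
      ∃ z : S, (a * θ * b) * θ * z * θ * (a * θ * b) = a * θ * b) ∧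
    (∀ a b : V →ₗ[K] V,
      (∃ x : V →ₗ[K] V, a ∘ₗ Θ ∘ₗ x ∘ₗ Θ ∘ₗ a = a) →
      (∃ y : V →ₗ[K] V, b ∘ₗ Θ ∘ₗ y ∘ₗ Θ ∘ₗ b = b) →
      ∃ z : V →ₗ[K] V,
        (a ∘ₗ Θ ∘ₗ b) ∘ₗ Θ ∘ₗ z ∘ₗ Θ ∘ₗ (a ∘ₗ Θ ∘ₗ b) = a ∘ₗ Θ ∘ₗ b) := by
  constructor
  · exact fun a b ha hb => semigroup_part hreg θ a b ha hb
  · intro a b ha hb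
    have hreg' : ∀ s : V →ₗ[K] V, ∃ t : V →ₗ[K] V, s * t * s = s := fun s => by
      obtain ⟨g, hg⟩ := endo_regular s
      exact ⟨g, by simpa [Module.End.mul_eq_comp, LinearMap.comp_assoc] using hg⟩
    have := semigroup_part hreg' Θ a b
      (by obtain ⟨x, hx⟩ := ha; exact ⟨x, by
        simpa [Module.End.mul_eq_comp, LinearMap.comp_assoc] using hx⟩)
      (by obtain ⟨y, hy⟩ := hb; exact ⟨y, by
        simpa [Module.End.mul_eq_comp, LinearMap.comp_assoc] using hy⟩)
    obtain ⟨z, hz⟩ := this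
    exact ⟨z, by simpa [Module.End.mul_eq_comp, LinearMap.comp_assoc] using hz⟩
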